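/- If k ≥ 1 is an integer and f(x) = ∫₀^{1/x} (1 − tx)^{k−1} dα(t) for some nonnegative Borel measure α, then f is k-times monotone on (0,∞), i.e., (−1)^j f^{(j)}(x) ≥ 0 for all 0 ≤ j ≤ k and x > 0. -/

import Mathlib

open MeasureTheory

open Filter Set Metric


private lemma posPow_hasDerivAt (m : ℕ) (hm : 1 ≤ m) (u : ℝ) :
    HasDerivAt (fun v : ℝ => max v 0 ^ (m + 1)) ((m + 1) * max u 0 ^ m) u := by
  have hm0 : m ≠ 0 := Nat.one_le_iff_ne_zero.mp hm
  rcases lt_trichotomy u 0 with hu | hu | hu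
  · have h0 : (fun v : ℝ => max v 0 ^ (m + 1)) =ᶠ[nhds u] fun _ => (0:ℝ) := by
      filter_upwards [eventually_lt_nhds hu] with v hv
      simp [max_eq_right hv.le]
    have h1 : HasDerivAt (fun _ : ℝ => (0:ℝ)) 0 u := hasDerivAt_const u 0
    have h2 := h1.congr_of_eventuallyEq h0
    simpa [max_eq_right hu.le, zero_pow hm0] using h2
  · subst hu
    have hz : ((m:ℝ) + 1) * max (0:ℝ) 0 ^ m = 0 := by simp [zero_pow hm0]
    rw [hasDerivAt_iff_tendsto_slope, hz]
    refine squeeze_zero_norm' (a := fun v : ℝ => |v|) ?_ ?_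
    · filter_upwards [eventually_nhdsWithin_of_eventually_nhds
        (eventually_abs_sub_lt 0 one_pos)] with v hv1
      simp only [sub_zero] at hv1
      have hs : slope (fun v : ℝ => max v 0 ^ (m + 1)) 0 v = max v 0 ^ (m+1) / v := by
        simp [slope_def_field, zero_pow]
      rw [hs]
      rcases le_or_gt v 0 with h | h
      · simp [max_eq_right h, abs_nonneg]
      · rw [max_eq_left h.le]
        rw [pow_succ, mul_div_assoc, div_self h.ne', mul_one, Real.norm_eq_abs, abs_pow]
        calc |v| ^ m ≤ |v| ^ 1 := pow_le_pow_of_le_one (abs_nonneg v) hv1.le hm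
          _ = |v| := pow_one _
    · have : Tendsto (fun v : ℝ => |v|) (nhds 0) (nhds 0) := by
        simpa using (continuous_abs.tendsto (0:ℝ))
      exact this.mono_left nhdsWithin_le_nhds
  · have h0 : (fun v : ℝ => max v 0 ^ (m + 1)) =ᶠ[nhds u] fun v => v ^ (m + 1) := by
      filter_upwards [eventually_gt_nhds hu] with v hv
      simp [max_eq_left hv.le]
    have h1 : HasDerivAt (fun v : ℝ => v ^ (m + 1)) ((m + 1) * u ^ m) u := by
      simpa using hasDerivAt_pow (m+1) u
    have h2 := h1.congr_of_eventuallyEq h0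
    simpa [max_eq_left hu.le] using h2

private lemma inner_hasDerivAt (t x₀ : ℝ) (j m : ℕ) (hm : 1 ≤ m) :
    HasDerivAt (fun x : ℝ => t ^ j * max (1 - t * x) 0 ^ (m + 1))
      (-((m + 1) * t ^ (j + 1) * max (1 - t * x₀) 0 ^ m)) x₀ := by
  have hg : HasDerivAt (fun x : ℝ => 1 - t * x) (-t) x₀ := by
    simpa using ((hasDerivAt_id x₀).const_mul t).const_sub 1
  have h2 := (posPow_hasDerivAt m hm (1 - t * x₀)).comp x₀ hg
  have h3 := h2.const_mul (t ^ j)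
  refine h3.congr_deriv ?_
  ring

private lemma deriv_nonpos_of_antitoneOn {g : ℝ → ℝ} {x : ℝ} (hx : (0:ℝ) < x)
    (hg : AntitoneOn g (Set.Ioi 0)) : deriv g x ≤ 0 := by
  by_cases hd : DifferentiableAt ℝ g x
  · have h1 := hd.hasDerivAt
    rw [hasDerivAt_iff_tendsto_slope] at h1
    refine le_of_tendsto h1 ?_
    have hmem : Set.Ioi (0:ℝ) ∈ nhds x := (isOpen_Ioi.mem_nhds hx)
    filter_upwards [eventually_nhdsWithin_of_eventually_nhds
      (eventually_of_mem hmem fun y hy => hy), eventually_mem_nhdsWithin] with y hy hyx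
    have hyx' : y ≠ x := hyx
    rcases lt_or_gt_of_ne hyx' with h | h
    · have := hg hy hx h.le
      rw [slope_def_field]
      apply div_nonpos_of_nonneg_of_nonpos <;> [linarith; linarith]
    · have := hg hx hy h.le
      rw [slope_def_field]
      apply div_nonpos_of_nonpos_of_nonneg <;> [linarith; linarith]
  · rw [deriv_zero_of_not_differentiableAt hd]

private lemma nb_aux {x : ℝ} {S : Set ℝ} (hS : ∀ ε > (0:ℝ), ∃ a b : ℝ, a < b ∧
    Set.Ioo a b ⊆ S ∩ Metric.ball x ε) (C : Set ℝ) (hC : C.Countable) :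
    (nhdsWithin x (S \ C)).NeBot := by
  rw [← mem_closure_iff_nhdsWithin_neBot]
  rw [Metric.mem_closure_iff]
  intro ε hε
  obtain ⟨a, b, hab, hsub⟩ := hS ε hε
  have hd : Dense Cᶜ := hC.dense_compl ℝ
  obtain ⟨y, hyC, hy⟩ := hd.exists_mem_open isOpen_Ioo (Set.nonempty_Ioo.mpr hab)
  refine ⟨y, ⟨(hsub hy).1, hyC⟩, ?_⟩
  have := (hsub hy).2
  rwa [Metric.mem_ball, dist_comm] at this

-- finiteness of α on [0,b]
private lemma fin_aux {k : ℕ} (hk : 1 ≤ k) {α : Measure ℝ}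
    (hint : ∀ x > (0 : ℝ),
      IntegrableOn (fun t => (1 - t * x) ^ (k - 1)) (Set.Icc 0 (1 / x)) α)
    (b : ℝ) : α (Set.Icc 0 b) < ⊤ := by
  set B : ℝ := max b 0 with hB
  have hB0 : (0:ℝ) ≤ B := le_max_right _ _
  have hsub : Set.Icc 0 b ⊆ Set.Icc 0 B := Set.Icc_subset_Icc le_rfl (le_max_left _ _)
  refine lt_of_le_of_lt (measure_mono hsub) ?_
  have hx : (0:ℝ) < 1 / (B + 1) := by positivity
  have h1 : 1 / (1 / (B + 1)) = B + 1 := by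
    field_simp
  have hint' := hint (1 / (B + 1)) hx
  rw [h1] at hint'
  have hε : (0:ℝ) < (1 / (B + 1)) ^ (k - 1) := by positivity
  have hlt := hint'.measure_ge_lt_top hε
  have hss : Set.Icc (0:ℝ) B ⊆
      {t | (1 / (B + 1)) ^ (k - 1) ≤ (1 - t * (1 / (B + 1))) ^ (k - 1)} := by
    intro t ht
    have h2 : 1 / (B + 1) ≤ 1 - t * (1 / (B + 1)) := by
      rw [div_le_iff₀ (by linarith)]
      have h3 : t * (1 / (B + 1)) * (B + 1) = t := by field_simp
      have := ht.2
      nlinarith [h3]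
    exact pow_le_pow_left₀ hx.le h2 (k - 1)
  calc α (Set.Icc 0 B)
      = (α.restrict (Set.Icc 0 (B + 1))) (Set.Icc 0 B) := by
        rw [Measure.restrict_apply measurableSet_Icc,
          Set.inter_eq_left.mpr (Set.Icc_subset_Icc le_rfl (by linarith))]
    _ ≤ (α.restrict (Set.Icc 0 (B + 1)))
        {t | (1 / (B + 1)) ^ (k - 1) ≤ (1 - t * (1 / (B + 1))) ^ (k - 1)} := measure_mono hss
    _ < ⊤ := hlt

-- integrability of bounded integrands
private lemma int_aux' {α : Measure ℝ} (hfin : ∀ b : ℝ, α (Set.Icc 0 b) < ⊤)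
    (j m : ℕ) {x : ℝ} (hx : 0 ≤ x) {b : ℝ} (hb : 0 ≤ b) :
    IntegrableOn (fun t => t ^ j * max (1 - t * x) 0 ^ m) (Set.Icc 0 b) α := by
  apply Measure.integrableOn_of_bounded (hfin b).ne
  · exact (Continuous.aestronglyMeasurable (by continuity))
  · refine (ae_restrict_mem measurableSet_Icc).mono fun t ht => ?_
    have h1 : (0:ℝ) ≤ t := ht.1
    have h2 : t ≤ b := ht.2
    have h3 : (0:ℝ) ≤ max (1 - t * x) 0 := le_max_right _ _
    have h4 : max (1 - t * x) 0 ≤ 1 := by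
      apply max_le _ zero_le_one
      nlinarith
    have h5 : t ^ j ≤ b ^ j := pow_le_pow_left₀ h1 h2 j
    rw [Real.norm_eq_abs, abs_of_nonneg (by positivity)]
    calc t ^ j * max (1 - t * x) 0 ^ m ≤ b ^ j * 1 ^ m := by
          apply mul_le_mul h5 (pow_le_pow_left₀ h3 h4 m) (by positivity) (by positivity)
      _ = b ^ j := by simp

private lemma countable_atoms {α : Measure ℝ} (hfin : ∀ b : ℝ, α (Set.Icc 0 b) < ⊤) :
    Set.Countable {t : ℝ | 0 < t ∧ α {t} ≠ 0} := by
  have key : ∀ n : ℕ, Set.Countable {t : ℝ | t ∈ Set.Icc (0:ℝ) n ∧ α {t} ≠ 0} := by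
    intro n
    have h := Measure.countable_meas_pos_of_disjoint_of_meas_iUnion_ne_top
      (μ := α) (As := fun t : ℝ => {t} ∩ Set.Icc (0:ℝ) n)
      (fun t => (measurableSet_singleton t).inter measurableSet_Icc)
      (fun s t hst => by
        simp only [Function.onFun]
        exact Set.disjoint_left.mpr (fun y hy hy2 => hst (hy.1.symm.trans hy2.1)))
      ?_
    · refine h.mono ?_
      rintro t ⟨ht1, ht2⟩
      have heq : ({t} : Set ℝ) ∩ Set.Icc (0:ℝ) n = {t} := by
        rw [Set.inter_eq_left]; simpa using ht1
      simp only [Set.mem_setOf_eq, heq]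
      exact pos_iff_ne_zero.mpr ht2
    · refine ne_of_lt (lt_of_le_of_lt (measure_mono ?_) (hfin n))
      intro y hy
      simp only [Set.mem_iUnion] at hy
      obtain ⟨i, hi⟩ := hy
      exact hi.2
  have hcover : {t : ℝ | 0 < t ∧ α {t} ≠ 0} ⊆
      ⋃ n : ℕ, {t : ℝ | t ∈ Set.Icc (0:ℝ) n ∧ α {t} ≠ 0} := by
    rintro t ⟨ht1, ht2⟩
    obtain ⟨n, hn⟩ := exists_nat_ge t
    exact Set.mem_iUnion.mpr ⟨n, ⟨⟨ht1.le, hn⟩, ht2⟩⟩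
  exact (Set.countable_iUnion key).mono hcover

private lemma mulx_le_one {t x : ℝ} (hx : 0 < x) (ht0 : 0 ≤ t) (ht : t ≤ 1 / x) :
    t * x ≤ 1 := by
  calc t * x ≤ (1/x) * x := by nlinarith
    _ = 1 := by field_simp

private lemma eqOn_aux (j m : ℕ) {x : ℝ} (hx : 0 < x) :
    Set.EqOn (fun t : ℝ => t ^ j * max (1 - t * x) 0 ^ m)
      (fun t : ℝ => t ^ j * (1 - t * x) ^ m) (Set.Icc 0 (1 / x)) := by
  intro t ht
  have h1 : t * x ≤ 1 := mulx_le_one hx ht.1 ht.2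
  simp only
  rw [max_eq_left (by linarith)]

private lemma int_aux2 {α : Measure ℝ} (hfin : ∀ b : ℝ, α (Set.Icc 0 b) < ⊤)
    (j m : ℕ) {x : ℝ} (hx : 0 < x) :
    IntegrableOn (fun t => t ^ j * (1 - t * x) ^ m) (Set.Icc 0 (1 / x)) α :=
  (int_aux' hfin j m hx.le (by positivity)).congr_fun (eqOn_aux j m hx) measurableSet_Icc

private lemma nonneg_aux {α : Measure ℝ} (j m : ℕ) {x : ℝ} (hx : 0 < x) :
    0 ≤ ∫ t in Set.Icc 0 (1 / x), t ^ j * (1 - t * x) ^ m ∂α := by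
  refine setIntegral_nonneg measurableSet_Icc fun t ht => ?_
  have h1 : t * x ≤ 1 := mulx_le_one hx ht.1 ht.2
  exact mul_nonneg (pow_nonneg ht.1 j) (pow_nonneg (by linarith) m)

private lemma E1 {α : Measure ℝ} (hfin : ∀ b : ℝ, α (Set.Icc 0 b) < ⊤)
    (j m : ℕ) (hm : 1 ≤ m) {x b : ℝ} (hx : 0 < x) (hb : 1 / x ≤ b) :
    ∫ t in Set.Icc 0 (1 / x), t ^ j * (1 - t * x) ^ m ∂α
      = ∫ t in Set.Icc 0 b, t ^ j * max (1 - t * x) 0 ^ m ∂α := by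
  have h0x : (0:ℝ) ≤ 1 / x := by positivity
  have hb0 : (0:ℝ) ≤ b := le_trans h0x hb
  have hdisj : Disjoint (Set.Icc (0:ℝ) (1/x)) (Set.Ioc (1/x) b) :=
    Set.disjoint_left.mpr fun t ht ht' => absurd ht.2 (not_le.mpr ht'.1)
  have hint1 : IntegrableOn (fun t => t ^ j * max (1 - t * x) 0 ^ m) (Set.Icc 0 (1/x)) α :=
    (int_aux' hfin j m hx.le hb0).mono_set (Set.Icc_subset_Icc le_rfl hb)
  have hint2 : IntegrableOn (fun t => t ^ j * max (1 - t * x) 0 ^ m) (Set.Ioc (1/x) b) α :=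
    (int_aux' hfin j m hx.le hb0).mono_set fun t ht => ⟨le_trans h0x ht.1.le, ht.2⟩
  rw [← Set.Icc_union_Ioc_eq_Icc h0x hb,
    setIntegral_union hdisj measurableSet_Ioc hint1 hint2]
  have hz : ∫ t in Set.Ioc (1/x) b, t ^ j * max (1 - t * x) 0 ^ m ∂α = 0 := by
    rw [setIntegral_congr_fun measurableSet_Ioc (g := fun _ => (0:ℝ))]
    · exact integral_zero _ _
    · intro t ht
      have h1 : 1 < t * x := by
        have := ht.1
        calc 1 = (1/x) * x := by field_simp
          _ < t * x := by nlinarith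
      simp only
      rw [max_eq_right (by linarith), zero_pow (Nat.one_le_iff_ne_zero.mp hm)]
      ring
  rw [setIntegral_congr_fun measurableSet_Icc (eqOn_aux j m hx).symm, hz, add_zero]

private lemma antitone_aux {α : Measure ℝ} (hfin : ∀ b : ℝ, α (Set.Icc 0 b) < ⊤)
    (j m : ℕ) :
    AntitoneOn (fun x => ∫ t in Set.Icc 0 (1 / x), t ^ j * (1 - t * x) ^ m ∂α)
      (Set.Ioi 0) := by
  intro x hx y hy hxy
  have hx0 : (0:ℝ) < x := hx
  have hy0 : (0:ℝ) < y := hy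
  have hinv : 1 / y ≤ 1 / x := one_div_le_one_div_of_le hx0 hxy
  simp only
  calc ∫ t in Set.Icc 0 (1 / y), t ^ j * (1 - t * y) ^ m ∂α
      ≤ ∫ t in Set.Icc 0 (1 / y), t ^ j * (1 - t * x) ^ m ∂α := by
        refine setIntegral_mono_on ?_ ?_ measurableSet_Icc fun t ht => ?_
        · exact int_aux2 hfin j m hy0
        · exact ((int_aux' hfin j m hx0.le (by positivity : (0:ℝ) ≤ 1/x)).mono_set
            (Set.Icc_subset_Icc le_rfl hinv)).congr_fun
            (fun t ht => eqOn_aux j m hx0 (Set.Icc_subset_Icc le_rfl hinv ht))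
            measurableSet_Icc
        · have h1 : t * y ≤ 1 := mulx_le_one hy0 ht.1 ht.2
          have h2 : t * x ≤ t * y := by nlinarith [ht.1]
          exact mul_le_mul_of_nonneg_left
            (pow_le_pow_left₀ (by linarith) (by linarith) m) (pow_nonneg ht.1 j)
    _ ≤ ∫ t in Set.Icc 0 (1 / x), t ^ j * (1 - t * x) ^ m ∂α := by
        refine setIntegral_mono_set (int_aux2 hfin j m hx0) ?_ ?_
        · refine (ae_restrict_mem measurableSet_Icc).mono fun t ht => ?_
          have h1 : t * x ≤ 1 := mulx_le_one hx0 ht.1 ht.2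
          exact mul_nonneg (pow_nonneg ht.1 j) (pow_nonneg (by linarith) m)
        · exact (Set.Icc_subset_Icc le_rfl hinv).eventuallyLE

private lemma finite_restrict {α : Measure ℝ} (hfin : ∀ b : ℝ, α (Set.Icc 0 b) < ⊤)
    (b : ℝ) : IsFiniteMeasure (α.restrict (Set.Icc 0 b)) :=
  ⟨by rw [Measure.restrict_apply_univ]; exact hfin b⟩

private lemma derivMain {α : Measure ℝ} (hfin : ∀ b : ℝ, α (Set.Icc 0 b) < ⊤)
    (j m : ℕ) (hm : 1 ≤ m) {x₀ : ℝ} (hx₀ : 0 < x₀) :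
    HasDerivAt (fun x => ∫ t in Set.Icc 0 (2 / x₀), t ^ j * max (1 - t * x) 0 ^ (m + 1) ∂α)
      (-(((m:ℝ) + 1) * ∫ t in Set.Icc 0 (2 / x₀), t ^ (j + 1) * max (1 - t * x₀) 0 ^ m ∂α))
      x₀ := by
  have hb0 : (0:ℝ) ≤ 2 / x₀ := by positivity
  haveI := finite_restrict hfin (2 / x₀)
  have key := hasDerivAt_integral_of_dominated_loc_of_deriv_le
    (μ := α.restrict (Set.Icc 0 (2 / x₀)))
    (F := fun x a => a ^ j * max (1 - a * x) 0 ^ (m + 1))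
    (F' := fun x a => -(((m:ℝ) + 1) * a ^ (j + 1) * max (1 - a * x) 0 ^ m))
    (x₀ := x₀) (s := Metric.ball x₀ x₀) (bound := fun _ => ((m:ℝ) + 1) * (2 / x₀) ^ (j + 1))
    (Metric.ball_mem_nhds x₀ hx₀) ?_ ?_ ?_ ?_ ?_ ?_
  · obtain ⟨-, hd⟩ := key
    refine hd.congr_deriv ?_
    rw [show (fun a : ℝ => -(((m:ℝ) + 1) * a ^ (j + 1) * max (1 - a * x₀) 0 ^ m))
      = fun a : ℝ => -(((m:ℝ) + 1) * (a ^ (j + 1) * max (1 - a * x₀) 0 ^ m)) by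
        funext a; ring]
    rw [integral_neg, MeasureTheory.integral_const_mul]
  · exact Eventually.of_forall fun x =>
      (Continuous.aestronglyMeasurable (by continuity))
  · exact int_aux' hfin j (m + 1) hx₀.le hb0
  · exact Continuous.aestronglyMeasurable (by continuity)
  · refine (ae_restrict_mem measurableSet_Icc).mono fun a ha => ?_
    intro x hx
    have hx' : 0 < x := by
      have := mem_ball_iff_norm.mp hx
      have := abs_lt.mp this
      linarith [this.1]
    have hM0 : (0:ℝ) ≤ max (1 - a * x) 0 := le_max_right _ _
    have hM1 : max (1 - a * x) 0 ≤ 1 := by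
      apply max_le _ zero_le_one
      nlinarith [ha.1, hx'.le]
    have hma : (0:ℝ) ≤ ((m:ℝ) + 1) * a ^ (j + 1) * max (1 - a * x) 0 ^ m := by
      have := ha.1
      positivity
    rw [Real.norm_eq_abs, abs_neg, abs_of_nonneg hma]
    have h5 : a ^ (j+1) ≤ (2 / x₀) ^ (j+1) := pow_le_pow_left₀ ha.1 ha.2 (j+1)
    calc ((m:ℝ) + 1) * a ^ (j + 1) * max (1 - a * x) 0 ^ m
        ≤ ((m:ℝ) + 1) * (2 / x₀) ^ (j + 1) * 1 ^ m := by
          apply mul_le_mul (by nlinarith) (pow_le_pow_left₀ hM0 hM1 m) (by positivity)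
            (by positivity)
      _ = ((m:ℝ) + 1) * (2 / x₀) ^ (j + 1) := by simp
  · exact integrable_const _
  · exact Eventually.of_forall fun a => fun x _ => inner_hasDerivAt a x j m hm


set_option maxHeartbeats 1000000 in
private lemma derivOne {α : Measure ℝ} (hfin : ∀ b : ℝ, α (Set.Icc 0 b) < ⊤)
    (j : ℕ) {x₀ : ℝ} (hx₀ : 0 < x₀) (hat : α {1 / x₀} = 0) :
    HasDerivAt (fun x => ∫ t in Set.Icc 0 (2 / x₀), t ^ j * max (1 - t * x) 0 ^ 1 ∂α)
      (-(∫ t in Set.Icc 0 (1 / x₀), t ^ (j + 1) ∂α)) x₀ := by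
  have hb0 : (0:ℝ) ≤ 2 / x₀ := by positivity
  have h12 : 1 / x₀ ≤ 2 / x₀ := by
    gcongr
    norm_num
  haveI := finite_restrict hfin (2 / x₀)
  have hsing : (α.restrict (Set.Icc 0 (2 / x₀))) {1 / x₀} = 0 := by
    rw [Measure.restrict_apply (measurableSet_singleton _)]
    exact le_antisymm (le_trans (measure_mono Set.inter_subset_left) hat.le) zero_le
  have hae : ∀ᵐ (a:ℝ) ∂(α.restrict (Set.Icc 0 (2 / x₀))), a ≠ 1 / x₀ := by
    rw [ae_iff]
    have he : {a : ℝ | ¬ a ≠ 1 / x₀} = {1 / x₀} := by ext a; simp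
    rw [he]; exact hsing
  have key := hasDerivAt_integral_of_dominated_loc_of_lip
    (μ := α.restrict (Set.Icc 0 (2 / x₀)))
    (F := fun x a => a ^ j * max (1 - a * x) 0 ^ 1)
    (F' := Set.indicator (Set.Iio (1 / x₀)) (fun a => -(a ^ (j + 1))))
    (x₀ := x₀) (s := Metric.ball x₀ x₀) (bound := fun _ => (2 / x₀) ^ (j + 1))
    (Metric.ball_mem_nhds x₀ hx₀) ?_ ?_ ?_ ?_ ?_ ?_
  · obtain ⟨-, hd⟩ := key
    refine hd.congr_deriv ?_
    rw [integral_indicator measurableSet_Iio, Measure.restrict_restrict measurableSet_Iio]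
    have hset : Set.Iio (1 / x₀) ∩ Set.Icc 0 (2 / x₀) = Set.Ico 0 (1 / x₀) := by
      ext t
      constructor
      · rintro ⟨h1, h2, h3⟩; exact ⟨h2, h1⟩
      · rintro ⟨h1, h2⟩; exact ⟨h2, h1, by linarith⟩
    rw [hset]
    have haeq : Set.Ico (0:ℝ) (1 / x₀) =ᵐ[α] Set.Icc (0:ℝ) (1 / x₀) := by
      rw [MeasureTheory.ae_eq_set]
      constructor
      · rw [Set.diff_eq_empty.mpr Set.Ico_subset_Icc_self]; simp
      · rw [Set.Icc_diff_Ico_same (by positivity : (0:ℝ) ≤ 1 / x₀)]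
        exact hat
    rw [setIntegral_congr_set haeq, integral_neg]
  · exact Eventually.of_forall fun x =>
      (Continuous.aestronglyMeasurable (by continuity))
  · exact int_aux' hfin j 1 hx₀.le hb0
  · exact ((Measurable.indicator (by measurability) measurableSet_Iio).aestronglyMeasurable)
  · refine (ae_restrict_mem measurableSet_Icc).mono fun a ha => ?_
    have hc0 : (0:ℝ) ≤ (2 / x₀) ^ (j + 1) := by positivity
    apply LipschitzWith.lipschitzOnWith
    apply LipschitzWith.of_dist_le_mul
    intro x y
    rw [Real.dist_eq, Real.dist_eq, Real.coe_nnabs, abs_of_nonneg hc0]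
    have h1 : a ^ j * max (1 - a * x) 0 ^ 1 - a ^ j * max (1 - a * y) 0 ^ 1
        = a ^ j * (max (1 - a * x) 0 - max (1 - a * y) 0) := by ring
    rw [h1, abs_mul, abs_of_nonneg (pow_nonneg ha.1 j)]
    have h2 : |max (1 - a * x) 0 - max (1 - a * y) 0| ≤ |(1 - a * x) - (1 - a * y)| :=
      abs_max_sub_max_le_abs _ _ _
    have h3 : |(1 - a * x) - (1 - a * y)| = a * |x - y| := by
      rw [show (1 - a * x) - (1 - a * y) = a * (y - x) by ring, abs_mul,
        abs_of_nonneg ha.1, abs_sub_comm]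
    calc a ^ j * |max (1 - a * x) 0 - max (1 - a * y) 0|
        ≤ a ^ j * (a * |x - y|) := by
          apply mul_le_mul_of_nonneg_left (le_trans h2 (le_of_eq h3)) (pow_nonneg ha.1 j)
      _ = a ^ (j + 1) * |x - y| := by ring
      _ ≤ (2 / x₀) ^ (j + 1) * |x - y| := by
          apply mul_le_mul_of_nonneg_right (pow_le_pow_left₀ ha.1 ha.2 (j+1)) (abs_nonneg _)
  · exact integrable_const _
  · filter_upwards [hae, ae_restrict_mem measurableSet_Icc] with a hne hmem
    rcases lt_or_gt_of_ne hne with hlt | hgt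
    · rw [Set.indicator_of_mem (Set.mem_Iio.mpr hlt)]
      have hax : a * x₀ < 1 := by
        calc a * x₀ < (1 / x₀) * x₀ := by nlinarith
          _ = 1 := by field_simp
      have hb : HasDerivAt (fun x : ℝ => 1 - a * x) (-a) x₀ := by
        simpa using ((hasDerivAt_id x₀).const_mul a).const_sub 1
      have hb2 : HasDerivAt (fun x : ℝ => a ^ j * (1 - a * x)) (-(a ^ (j + 1))) x₀ := by
        refine (hb.const_mul (a ^ j)).congr_deriv ?_
        ring
      apply hb2.congr_of_eventuallyEq
      have hopen : IsOpen {x : ℝ | 0 < 1 - a * x} := by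
        apply isOpen_lt continuous_const (by continuity)
      filter_upwards [hopen.mem_nhds (by simp only [Set.mem_setOf_eq]; linarith)] with x hx
      rw [max_eq_left (le_of_lt hx), pow_one]
    · rw [Set.indicator_of_notMem (by simp only [Set.mem_Iio, not_lt]; exact hgt.le)]
      have hax : 1 < a * x₀ := by
        calc 1 = (1 / x₀) * x₀ := by field_simp
          _ < a * x₀ := by nlinarith
      have hopen : IsOpen {x : ℝ | 1 - a * x < 0} := isOpen_lt (by continuity) continuous_const
      have hzero : (fun x : ℝ => a ^ j * max (1 - a * x) 0 ^ 1) =ᶠ[nhds x₀] fun _ => (0:ℝ) := by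
        filter_upwards [hopen.mem_nhds (by simp only [Set.mem_setOf_eq]; linarith)] with x hx
        rw [max_eq_right (le_of_lt hx), pow_one, mul_zero]
      exact (hasDerivAt_const x₀ (0:ℝ)).congr_of_eventuallyEq hzero

/-- If f(x) = ∫₀^{1/x} (1−tx)^{k−1} dα(t) for a nonnegative Borel measure α,
then f is k-times monotone on (0,∞). -/
theorem k_times_monotone (k : ℕ) (hk : 1 ≤ k) (f : ℝ → ℝ) (α : Measure ℝ)
    (hint : ∀ x > (0 : ℝ),
      IntegrableOn (fun t => (1 - t * x) ^ (k - 1)) (Set.Icc 0 (1 / x)) α)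
    (hf : ∀ x > (0 : ℝ),
      f x = ∫ t in Set.Icc 0 (1 / x), (1 - t * x) ^ (k - 1) ∂α) :
    ∀ j : ℕ, j ≤ k → ∀ x > (0 : ℝ), 0 ≤ (-1 : ℝ) ^ j * iteratedDeriv j f x := by
  have hfin : ∀ b : ℝ, α (Set.Icc 0 b) < ⊤ := fin_aux hk hint
  set F : ℕ → ℝ → ℝ :=
    fun i x => ∫ t in Set.Icc 0 (1 / x), t ^ i * (1 - t * x) ^ (k - 1 - i) ∂α with hFdef
  -- derivative of F i for small i
  have hder : ∀ i : ℕ, i + 3 ≤ k → ∀ y : ℝ, 0 < y →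
      HasDerivAt (F i) (-(((k - 1 - i : ℕ) : ℝ) * F (i + 1) y)) y := by
    intro i hik y hy
    have hm1 : 1 ≤ k - 2 - i := by omega
    have hsplit : k - 1 - i = (k - 2 - i) + 1 := by omega
    have heq : F i =ᶠ[nhds y]
        (fun x => ∫ t in Set.Icc 0 (2 / y), t ^ i * max (1 - t * x) 0 ^ ((k - 2 - i) + 1) ∂α) := by
      filter_upwards [isOpen_Ioi.mem_nhds (half_lt_self hy)] with z hz
      have hz0 : 0 < z := lt_trans (by positivity) hz
      have hzb : 1 / z ≤ 2 / y := by
        rw [div_le_div_iff₀ hz0 hy]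
        have : y / 2 < z := hz
        nlinarith
      simp only [hFdef]
      rw [← hsplit]
      exact E1 hfin i (k - 1 - i) (by omega) hz0 hzb
    have hd := derivMain hfin i (k - 2 - i) hm1 hy
    have hd2 := hd.congr_of_eventuallyEq heq
    refine hd2.congr_deriv ?_
    have he2 : ∫ t in Set.Icc 0 (2 / y), t ^ (i+1) * max (1 - t * y) 0 ^ (k - 2 - i) ∂α
        = F (i + 1) y := by
      simp only [hFdef]
      rw [show k - 1 - (i + 1) = k - 2 - i by omega]
      have h12y : 1 / y ≤ 2 / y := by gcongr; norm_num
      exact (E1 hfin (i + 1) (k - 2 - i) hm1 hy h12y).symm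
    rw [he2]
    have hc : ((k - 1 - i : ℕ) : ℝ) = ((k - 2 - i : ℕ) : ℝ) + 1 := by
      rw [hsplit]; push_cast; ring
    rw [hc]
  -- iterated derivative formula
  have hformula : ∀ i : ℕ, i + 2 ≤ k → ∀ y : ℝ, 0 < y →
      iteratedDeriv i f y
        = (-1 : ℝ) ^ i * (∏ l ∈ Finset.range i, ((k - 1 - l : ℕ) : ℝ)) * F i y := by
    intro i
    induction i with
    | zero =>
      intro _ y hy
      simp only [iteratedDeriv_zero, pow_zero, Finset.range_zero, Finset.prod_empty,
        one_mul, hFdef]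
      rw [hf y hy]
      refine setIntegral_congr_fun measurableSet_Icc fun t ht => ?_
      simp
    | succ i ih =>
      intro hik y hy
      rw [iteratedDeriv_succ]
      have hev : iteratedDeriv i f =ᶠ[nhds y]
          fun z => (-1 : ℝ) ^ i * (∏ l ∈ Finset.range i, ((k - 1 - l : ℕ) : ℝ)) * F i z := by
        filter_upwards [isOpen_Ioi.mem_nhds hy] with z hz
        exact ih (by omega) z hz
      rw [hev.deriv_eq, deriv_const_mul_field, (hder i (by omega) y hy).deriv,
        Finset.prod_range_succ]
      ring
  have hFnn : ∀ i : ℕ, ∀ y : ℝ, 0 < y → 0 ≤ F i y := by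
    intro i y hy
    simp only [hFdef]
    exact nonneg_aux i (k - 1 - i) hy
  have hcnn : ∀ i : ℕ, 0 ≤ ∏ l ∈ Finset.range i, ((k - 1 - l : ℕ) : ℝ) :=
    fun i => Finset.prod_nonneg fun l _ => Nat.cast_nonneg _
  intro j hj x hx
  have hcase : j + 2 ≤ k ∨ (j + 1 = k ∧ 1 ≤ j) ∨ (j = 0 ∧ k = 1) ∨ j = k := by omega
  rcases hcase with h1 | ⟨h2, h2'⟩ | ⟨h30, h31⟩ | h4
  · -- easy case
    rw [hformula j h1 x hx]
    have hsq : (-1 : ℝ) ^ j * (-1 : ℝ) ^ j = 1 := by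
      rw [← pow_add]; exact Even.neg_one_pow ⟨j, rfl⟩
    have hnn := mul_nonneg (hcnn j) (hFnn j x hx)
    calc (0:ℝ) ≤ ((-1 : ℝ) ^ j * (-1 : ℝ) ^ j) *
          ((∏ l ∈ Finset.range j, ((k - 1 - l : ℕ) : ℝ)) * F j x) := by
          rw [hsq, one_mul]; exact hnn
      _ = (-1 : ℝ) ^ j * ((-1 : ℝ) ^ j *
            (∏ l ∈ Finset.range j, ((k - 1 - l : ℕ) : ℝ)) * F j x) := by ring
  · -- j = k - 1, j ≥ 1
    obtain ⟨i, rfl⟩ : ∃ i, j = i + 1 := ⟨j - 1, by omega⟩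
    rw [iteratedDeriv_succ]
    have hev : iteratedDeriv i f =ᶠ[nhds x]
        fun z => (-1 : ℝ) ^ i * (∏ l ∈ Finset.range i, ((k - 1 - l : ℕ) : ℝ)) * F i z := by
      filter_upwards [isOpen_Ioi.mem_nhds hx] with z hz
      exact hformula i (by omega) z hz
    rw [hev.deriv_eq, deriv_const_mul_field]
    have hanti : AntitoneOn (F i) (Set.Ioi 0) := by
      simp only [hFdef]; exact antitone_aux hfin i (k - 1 - i)
    have hd := deriv_nonpos_of_antitoneOn hx hanti
    have hsq : (-1 : ℝ) ^ i * (-1 : ℝ) ^ i = 1 := by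
      rw [← pow_add]; exact Even.neg_one_pow ⟨i, rfl⟩
    calc (0:ℝ) ≤ ((-1 : ℝ) ^ i * (-1 : ℝ) ^ i) *
          ((∏ l ∈ Finset.range i, ((k - 1 - l : ℕ) : ℝ)) * -(deriv (F i) x)) := by
          rw [hsq, one_mul]
          exact mul_nonneg (hcnn i) (neg_nonneg.mpr hd)
      _ = (-1 : ℝ) ^ (i + 1) * ((-1 : ℝ) ^ i *
            (∏ l ∈ Finset.range i, ((k - 1 - l : ℕ) : ℝ)) * deriv (F i) x) := by ring
  · -- k = 1, j = 0
    subst h30 h31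
    simp only [pow_zero, one_mul, iteratedDeriv_zero]
    rw [hf x hx]
    refine setIntegral_nonneg measurableSet_Icc fun t ht => ?_
    simp
  · -- j = k
    subst h4
    have hiter : iteratedDeriv j f = deriv (iteratedDeriv (j - 1) f) := by
      conv_lhs => rw [show j = (j - 1) + 1 by omega]
      rw [iteratedDeriv_succ]
    rw [hiter]
    by_cases hdg : DifferentiableAt ℝ (iteratedDeriv (j - 1) f) x
    swap
    · rw [deriv_zero_of_not_differentiableAt hdg, mul_zero]
    have hsig : ∃ σ : ℝ, 0 < σ ∧ ∀ y : ℝ, 0 < y → α {1 / y} = 0 →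
        iteratedDeriv (j - 1) f y = ((-1 : ℝ) ^ (j - 1) * σ) * F (j - 1) y := by
      rcases eq_or_lt_of_le hk with hj1 | hj2
      · -- j = 1
        refine ⟨1, one_pos, fun y hy _ => ?_⟩
        have hj1' : j = 1 := hj1.symm
        subst hj1'
        simp only [show (1:ℕ) - 1 = 0 from rfl, iteratedDeriv_zero, pow_zero, one_mul, hFdef]
        rw [hf y hy]
        refine setIntegral_congr_fun measurableSet_Icc fun t ht => ?_
        simp
      · -- j ≥ 2
        refine ⟨∏ l ∈ Finset.range (j - 2), ((j - 1 - l : ℕ) : ℝ), ?_, fun y hy hat => ?_⟩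
        · refine Finset.prod_pos fun l hl => ?_
          have hlr := Finset.mem_range.mp hl
          have hpos : 0 < j - 1 - l := by omega
          exact_mod_cast Nat.cast_pos.mpr hpos
        · have h1 : iteratedDeriv (j - 1) f y = deriv (iteratedDeriv (j - 2) f) y := by
            conv_lhs => rw [show j - 1 = (j - 2) + 1 by omega]
            rw [iteratedDeriv_succ]
          have hev : iteratedDeriv (j - 2) f =ᶠ[nhds y]
              fun z => (-1 : ℝ) ^ (j - 2) *
                (∏ l ∈ Finset.range (j - 2), ((j - 1 - l : ℕ) : ℝ)) * F (j - 2) z := by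
            filter_upwards [isOpen_Ioi.mem_nhds hy] with z hz
            exact hformula (j - 2) (by omega) z hz
          have hd1 : HasDerivAt (F (j - 2)) (-(F (j - 1) y)) y := by
            have heq : F (j - 2) =ᶠ[nhds y]
                (fun z => ∫ t in Set.Icc 0 (2 / y), t ^ (j - 2) * max (1 - t * z) 0 ^ 1 ∂α) := by
              filter_upwards [isOpen_Ioi.mem_nhds (half_lt_self hy)] with z hz
              have hz0 : (0:ℝ) < z := lt_trans (by positivity) hz
              have hzb : 1 / z ≤ 2 / y := by
                rw [div_le_div_iff₀ hz0 hy]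
                have : y / 2 < z := hz
                nlinarith
              simp only [hFdef]
              rw [show j - 1 - (j - 2) = 1 by omega]
              exact E1 hfin (j - 2) 1 le_rfl hz0 hzb
            have hd0 := (derivOne hfin (j - 2) hy hat).congr_of_eventuallyEq heq
            refine hd0.congr_deriv ?_
            congr 1
            simp only [hFdef]
            rw [show j - 2 + 1 = j - 1 by omega]
            refine setIntegral_congr_fun measurableSet_Icc fun t ht => ?_
            rw [show j - 1 - (j - 1) = 0 by omega]
            simp
          rw [h1, hev.deriv_eq, deriv_const_mul_field, hd1.deriv]
          rw [show (-1:ℝ) ^ (j - 1) = (-1) ^ (j - 2) * (-1) by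
            rw [← pow_succ, show j - 2 + 1 = j - 1 by omega]]
          ring
    obtain ⟨σ, hσ0, hgval⟩ := hsig
    have hC : Set.Countable {y : ℝ | 0 < y ∧ α {1 / y} ≠ 0} := by
      refine ((countable_atoms hfin).image (fun t => 1 / t)).mono ?_
      rintro y ⟨hy0, hyne⟩
      exact ⟨1 / y, ⟨by positivity, hyne⟩, one_div_one_div y⟩
    have hanti : AntitoneOn (F (j - 1)) (Set.Ioi 0) := by
      simp only [hFdef]; exact antitone_aux hfin (j - 1) (j - 1 - (j - 1))
    have hnbL : (nhdsWithin x
        (Set.Ioo 0 x \ {y : ℝ | 0 < y ∧ α {1 / y} ≠ 0})).NeBot := by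
      refine nb_aux (fun ε hε => ?_) _ hC
      refine ⟨x - min ε x / 2, x, by
        have := lt_min hε hx; linarith [min_le_left ε x], fun y hy => ?_⟩
      have h1 := min_le_left ε x
      have h2 := min_le_right ε x
      have h3 := lt_min hε hx
      constructor
      · exact ⟨by linarith [hy.1], hy.2⟩
      · rw [Metric.mem_ball, Real.dist_eq, abs_of_nonpos (by linarith [hy.2])]
        linarith [hy.1]
    by_cases hatom : α {1 / x} = 0
    · -- slope argument
      have hslope := hdg.hasDerivAt
      rw [hasDerivAt_iff_tendsto_slope] at hslope
      have hl : nhdsWithin x (Set.Ioo 0 x \ {y : ℝ | 0 < y ∧ α {1 / y} ≠ 0})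
          ≤ nhdsWithin x {x}ᶜ :=
        nhdsWithin_mono x (fun y hy => ne_of_lt hy.1.2)
      have ht2 := (hslope.mono_left hl).const_mul ((-1 : ℝ) ^ j)
      refine ge_of_tendsto ht2 ?_
      filter_upwards [self_mem_nhdsWithin] with y hy
      obtain ⟨⟨hy0, hyx⟩, hyC⟩ := hy
      have hynot : α {1 / y} = 0 := by
        by_contra h; exact hyC ⟨hy0, h⟩
      rw [slope_def_field, hgval y hy0 hynot, hgval x hx hatom]
      have hsq : (-1 : ℝ) ^ (j - 1) * (-1 : ℝ) ^ (j - 1) = 1 := by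
        rw [← pow_add]; exact Even.neg_one_pow ⟨j - 1, rfl⟩
      have hpj : (-1 : ℝ) ^ j = (-1 : ℝ) ^ (j - 1) * (-1) := by
        rw [← pow_succ, show j - 1 + 1 = j by omega]
      have hH : F (j - 1) x ≤ F (j - 1) y := hanti hy0 hx hyx.le
      have hinv : (y - x)⁻¹ < 0 := by
        rw [inv_lt_zero]; linarith
      rw [div_eq_mul_inv, hpj]
      have hrng : (-1 : ℝ) ^ (j - 1) * -1 *
            (((-1 : ℝ) ^ (j - 1) * σ * F (j - 1) y -
              (-1 : ℝ) ^ (j - 1) * σ * F (j - 1) x) * (y - x)⁻¹)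
          = ((-1 : ℝ) ^ (j - 1) * (-1 : ℝ) ^ (j - 1)) *
              (σ * ((F (j - 1) x - F (j - 1) y) * (y - x)⁻¹)) := by ring
      rw [hrng, hsq, one_mul]
      have h5 : 0 ≤ (F (j - 1) x - F (j - 1) y) * (y - x)⁻¹ := by nlinarith
      exact mul_nonneg hσ0.le h5
    · -- atom: contradiction with differentiability
      exfalso
      have hfinx : α {1 / x} < ⊤ := by
        refine lt_of_le_of_lt (measure_mono ?_) (hfin (1 / x))
        intro t ht
        rw [Set.mem_singleton_iff] at ht
        subst ht
        exact ⟨by positivity, le_rfl⟩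
      set δ : ℝ := (1 / (2 * x)) ^ (j - 1) * (α {1 / x}).toReal with hδdef
      have hδ : 0 < δ := by
        refine mul_pos (by positivity) (ENNReal.toReal_pos hatom hfinx.ne)
      have hIone : ∀ b : ℝ, 0 ≤ b →
          IntegrableOn (fun t : ℝ => t ^ (j - 1)) (Set.Icc 0 b) α := by
        intro b hb
        refine (int_aux' hfin (j - 1) 0 le_rfl hb).congr_fun
          (fun t ht => by simp) measurableSet_Icc
      have hHeq : ∀ z : ℝ, 0 < z →
          F (j - 1) z = ∫ t in Set.Icc 0 (1 / z), t ^ (j - 1) ∂α := by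
        intro z hz
        simp only [hFdef]
        refine setIntegral_congr_fun measurableSet_Icc fun t ht => ?_
        rw [show j - 1 - (j - 1) = 0 by omega]
        simp
      have hjump : ∀ z : ℝ, 0 < z → z < x → ∀ y : ℝ, x < y → y < 2 * x →
          F (j - 1) y + δ ≤ F (j - 1) z := by
        intro z hz0 hzx y hxy hy2
        have hy0 : (0:ℝ) < y := lt_trans hx hxy
        have hinv1 : 1 / y < 1 / x := one_div_lt_one_div_of_lt hx hxy
        have hinv2 : 1 / x < 1 / z := one_div_lt_one_div_of_lt hz0 hzx
        have hinv3 : 1 / (2 * x) < 1 / y := one_div_lt_one_div_of_lt hy0 hy2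
        have hsub : Set.Ioc (1 / y) (1 / z) ⊆ Set.Icc 0 (1 / z) := by
          intro t ht
          exact ⟨le_trans (by positivity) ht.1.le, ht.2⟩
        have hint2 : IntegrableOn (fun t : ℝ => t ^ (j - 1)) (Set.Ioc (1 / y) (1 / z)) α :=
          (hIone (1 / z) (by positivity)).mono_set hsub
        have hdisj : Disjoint (Set.Icc (0:ℝ) (1 / y)) (Set.Ioc (1 / y) (1 / z)) :=
          Set.disjoint_left.mpr fun t ht ht' => absurd ht.2 (not_le.mpr ht'.1)
        have hu : Set.Icc (0:ℝ) (1 / z) = Set.Icc 0 (1 / y) ∪ Set.Ioc (1 / y) (1 / z) :=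
          (Set.Icc_union_Ioc_eq_Icc (by positivity) (by linarith)).symm
        rw [hHeq z hz0, hHeq y hy0, hu,
          setIntegral_union hdisj measurableSet_Ioc (hIone (1 / y) (by positivity)) hint2]
        have hne : α (Set.Ioc (1 / y) (1 / z)) ≠ ⊤ :=
          (lt_of_le_of_lt (measure_mono hsub) (hfin (1 / z))).ne
        have hconst := setIntegral_ge_of_const_le (c := (1 / (2 * x)) ^ (j - 1))
          measurableSet_Ioc hne (fun t ht =>
            pow_le_pow_left₀ (by positivity) (by linarith [ht.1]) (j - 1)) hint2
        have hmono : (α {1 / x}).toReal ≤ (α (Set.Ioc (1 / y) (1 / z))).toReal := by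
          refine ENNReal.toReal_mono hne (measure_mono ?_)
          intro t ht
          rw [Set.mem_singleton_iff] at ht
          subst ht
          exact ⟨hinv1, hinv2.le⟩
        have : δ ≤ ∫ t in Set.Ioc (1 / y) (1 / z), t ^ (j - 1) ∂α := by
          calc δ = (1 / (2 * x)) ^ (j - 1) * (α {1 / x}).toReal := rfl
            _ ≤ (1 / (2 * x)) ^ (j - 1) * (α (Set.Ioc (1 / y) (1 / z))).toReal :=
              mul_le_mul_of_nonneg_left hmono (by positivity)
            _ ≤ _ := by rw [smul_eq_mul, mul_comm] at hconst; exact hconst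
        linarith
      have hnbR : (nhdsWithin x
          (Set.Ioo x (2 * x) \ {y : ℝ | 0 < y ∧ α {1 / y} ≠ 0})).NeBot := by
        refine nb_aux (fun ε hε => ?_) _ hC
        refine ⟨x, x + min ε x / 2, by
          have := lt_min hε hx; linarith, fun y hy => ?_⟩
        have h1 := min_le_left ε x
        have h2 := min_le_right ε x
        have h3 := lt_min hε hx
        constructor
        · exact ⟨hy.1, by linarith [hy.2]⟩
        · rw [Metric.mem_ball, Real.dist_eq, abs_of_nonneg (by linarith [hy.1])]
          linarith [hy.2]
      set σ' : ℝ := (-1 : ℝ) ^ (j - 1) * σ with hσ'def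
      have hσ'ne : σ' ≠ 0 := mul_ne_zero (pow_ne_zero _ (by norm_num)) (ne_of_gt hσ0)
      have hcont := hdg.continuousAt
      have hTL : Tendsto (F (j - 1))
          (nhdsWithin x (Set.Ioo 0 x \ {y : ℝ | 0 < y ∧ α {1 / y} ≠ 0}))
          (nhds (σ'⁻¹ * iteratedDeriv (j - 1) f x)) := by
        have h0 : Tendsto (iteratedDeriv (j - 1) f)
            (nhdsWithin x (Set.Ioo 0 x \ {y : ℝ | 0 < y ∧ α {1 / y} ≠ 0}))
            (nhds (iteratedDeriv (j - 1) f x)) :=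
          hcont.tendsto.mono_left nhdsWithin_le_nhds
        have hev : iteratedDeriv (j - 1) f
            =ᶠ[nhdsWithin x (Set.Ioo 0 x \ {y : ℝ | 0 < y ∧ α {1 / y} ≠ 0})]
            fun y => σ' * F (j - 1) y := by
          filter_upwards [self_mem_nhdsWithin] with y hy
          obtain ⟨⟨hy0, _⟩, hyC⟩ := hy
          have hynot : α {1 / y} = 0 := by by_contra h; exact hyC ⟨hy0, h⟩
          rw [hgval y hy0 hynot, hσ'def]
        have h2 := (h0.congr' hev).const_mul σ'⁻¹
        refine h2.congr fun y => ?_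
        field_simp
      have hTR : Tendsto (F (j - 1))
          (nhdsWithin x (Set.Ioo x (2 * x) \ {y : ℝ | 0 < y ∧ α {1 / y} ≠ 0}))
          (nhds (σ'⁻¹ * iteratedDeriv (j - 1) f x)) := by
        have h0 : Tendsto (iteratedDeriv (j - 1) f)
            (nhdsWithin x (Set.Ioo x (2 * x) \ {y : ℝ | 0 < y ∧ α {1 / y} ≠ 0}))
            (nhds (iteratedDeriv (j - 1) f x)) :=
          hcont.tendsto.mono_left nhdsWithin_le_nhds
        have hev : iteratedDeriv (j - 1) f
            =ᶠ[nhdsWithin x (Set.Ioo x (2 * x) \ {y : ℝ | 0 < y ∧ α {1 / y} ≠ 0})]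
            fun y => σ' * F (j - 1) y := by
          filter_upwards [self_mem_nhdsWithin] with y hy
          obtain ⟨⟨hyx, _⟩, hyC⟩ := hy
          have hy0 : (0:ℝ) < y := lt_trans hx hyx
          have hynot : α {1 / y} = 0 := by by_contra h; exact hyC ⟨hy0, h⟩
          rw [hgval y hy0 hynot, hσ'def]
        have h2 := (h0.congr' hev).const_mul σ'⁻¹
        refine h2.congr fun y => ?_
        field_simp
      have hstep1 : ∀ y ∈ Set.Ioo x (2 * x) \ {y : ℝ | 0 < y ∧ α {1 / y} ≠ 0},
          F (j - 1) y + δ ≤ σ'⁻¹ * iteratedDeriv (j - 1) f x := by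
        intro y hy
        refine ge_of_tendsto hTL ?_
        filter_upwards [self_mem_nhdsWithin] with z hz
        exact hjump z hz.1.1 hz.1.2 y hy.1.1 hy.1.2
      have hstep2 : σ'⁻¹ * iteratedDeriv (j - 1) f x
          ≤ σ'⁻¹ * iteratedDeriv (j - 1) f x - δ := by
        refine le_of_tendsto hTR ?_
        filter_upwards [self_mem_nhdsWithin] with y hy
        linarith [hstep1 y hy]
      linarith
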